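/- Let p be a prime with p ≡ 1, −1, 49, or −49 (mod 120), and take coefficients a = b = c = 1, so that φ(S) = (∑_{x∈S} x)² + (∑_{x∈S} x²) + (∑_{x∈S} x). Then D(φ,p) ≥ p + 6. -/

import Mathlib

/-- `phi a b c S = a·(∑_{x∈S} x)² + b·(∑_{x∈S} x²) + c·(∑_{x∈S} x)`,
sums taken with multiplicity. -/
def phi {p : ℕ} (a b c : ZMod p) (S : Multiset (ZMod p)) : ZMod p :=
  a * S.sum ^ 2 + b * (S.map (fun x => x ^ 2)).sum + c * S.sum

/-- `S` is φ-zero-free: no nonempty submultiset `T` of `S` has `phi a b c T = 0`. -/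
def PhiZeroFree {p : ℕ} (a b c : ZMod p) (S : Multiset (ZMod p)) : Prop :=
  ∀ T : Multiset (ZMod p), T ≤ S → T ≠ 0 → phi a b c T ≠ 0

/-- The set of positive lengths `ℓ` such that every multiset over `ZMod p` of
cardinality at least `ℓ` has a nonempty submultiset `T` with `phi a b c T = 0`.
The Davenport φ-constant `D(φ,p)` is the least element of this set. -/
def DavSet {p : ℕ} (a b c : ZMod p) : Set ℕ :=
  {ℓ : ℕ | 0 < ℓ ∧ ∀ S : Multiset (ZMod p), ℓ ≤ Multiset.card S →
    ∃ T : Multiset (ZMod p), T ≤ S ∧ T ≠ 0 ∧ phi a b c T = 0}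

/-- `DavSet` is nonempty: `p·p + 1` always belongs to it. -/
lemma davset_mem_aux {p : ℕ} [Fact p.Prime] (a b c : ZMod p) :
    (p * p + 1) ∈ DavSet a b c := by
  constructor
  · positivity
  intro S hS
  by_cases h0 : (0 : ZMod p) ∈ S
  · refine ⟨{0}, ?_, by simp, by simp [phi]⟩
    rw [Multiset.le_iff_count]
    intro x
    rw [Multiset.count_singleton]
    by_cases hx : x = 0 <;>
      simp [hx, Multiset.one_le_count_iff_mem, h0]
  · -- some element occurs at least p times
    have hex : ∃ x : ZMod p, p ≤ S.count x := by
      by_contra hc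
      push_neg at hc
      have hcard : Multiset.card S = ∑ x ∈ S.toFinset, S.count x :=
        (Multiset.toFinset_sum_count_eq S).symm
      have hle : ∑ x ∈ S.toFinset, S.count x ≤ S.toFinset.card * (p - 1) := by
        apply Finset.sum_le_card_nsmul
        intro x _
        exact Nat.le_sub_one_of_lt (hc x)
      have h1 : S.toFinset.card ≤ p := by
        have := Finset.card_le_univ S.toFinset
        simpa [ZMod.card p] using this
      have : Multiset.card S ≤ p * (p - 1) :=
        hcard ▸ hle.trans (Nat.mul_le_mul_right _ h1)
      have hplt : p * (p - 1) < p * p + 1 := by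
        have : p * (p - 1) ≤ p * p := Nat.mul_le_mul_left _ (Nat.sub_le _ _)
        omega
      omega
    obtain ⟨x, hx⟩ := hex
    refine ⟨Multiset.replicate p x, Multiset.le_count_iff_replicate_le.mp hx, ?_, ?_⟩
    · intro hz
      have := congrArg Multiset.card hz
      simp [(Fact.out : p.Prime).ne_zero] at this
    · simp [phi, Multiset.map_replicate, Multiset.sum_replicate, nsmul_eq_mul,
        ZMod.natCast_self]

/-- If `2` is a square mod an odd prime `p`, then some `-(y²+y)` is a nonsquare. -/
lemma exists_nonsquare_val (p : ℕ) [Fact p.Prime] (hp2 : p ≠ 2)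
    (h2 : IsSquare (2 : ZMod p)) :
    ∃ y : ZMod p, ¬ IsSquare (-(y ^ 2 + y)) := by
  by_contra h
  push_neg at h
  have h2ne : (2 : ZMod p) ≠ 0 := by
    intro hh
    have hd : p ∣ 2 := (ZMod.natCast_eq_zero_iff 2 p).mp (by exact_mod_cast hh)
    exact hp2 ((Nat.prime_dvd_prime_iff_eq Fact.out Nat.prime_two).mp hd)
  set u : ZMod p := (2 : ZMod p)⁻¹ with hu
  have h2u : (2 : ZMod p) * u = 1 := mul_inv_cancel₀ h2ne
  have h1 : ∀ z : ZMod p, IsSquare (u ^ 2 - z ^ 2) := by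
    intro z
    have hz := h (z - u)
    have e : -((z - u) ^ 2 + (z - u)) = u ^ 2 - z ^ 2 := by
      linear_combination (z - u) * h2u
    rwa [e] at hz
  have hsub : ∀ t : ZMod p, IsSquare t → IsSquare (1 - t) := by
    intro t ⟨r, ht⟩
    have h4 : (1 : ZMod p) - t = (2 : ZMod p) ^ 2 * (u ^ 2 - (r * u) ^ 2) := by
      linear_combination (r * r - 1) * (1 + 2 * u) * h2u - ht
    rw [h4]
    exact (IsSquare.mul ⟨2, by ring⟩ (h1 (r * u)))
  have hneg1 : IsSquare (-1 : ZMod p) := by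
    have h' := hsub 2 h2
    rwa [show (1 : ZMod p) - 2 = -1 by ring] at h'
  have hplus : ∀ t : ZMod p, IsSquare t → IsSquare (t + 1) := by
    intro t ht
    have : IsSquare (-t) := by simpa using hneg1.mul ht
    have := hsub (-t) this
    simpa [sub_neg_eq_add, add_comm] using this
  have hnat : ∀ n : ℕ, IsSquare ((n : ZMod p)) := by
    intro n
    induction n with
    | zero => exact ⟨0, by simp⟩
    | succ k ih => push_cast; exact hplus _ ih
  obtain ⟨a, ha⟩ := FiniteField.exists_nonsquare (F := ZMod p)
    (by rw [ZMod.ringChar_zmod_n]; exact hp2)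
  obtain ⟨n, rfl⟩ := ZMod.natCast_rightInverse.surjective a
  exact ha (hnat n)

/-- The construction: `(p-1)` copies of `-1` plus `6` copies of a suitable `y`
is φ-zero-free for `φ = (∑x)² + ∑x² + ∑x`. -/
lemma zerofree_construction (p : ℕ) [Fact p.Prime] (hp7 : 7 ≤ p) (y : ZMod p)
    (hy : ¬ IsSquare (-(y ^ 2 + y)))
    (hsq : ∀ j : ℕ, 1 ≤ j → j ≤ 6 → IsSquare ((j : ZMod p))) :
    PhiZeroFree 1 1 1 (Multiset.replicate (p - 1) (-1) + Multiset.replicate 6 y) := by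
  have hyne : y ≠ -1 := by
    intro hy1
    exact hy (hy1 ▸ ⟨0, by ring⟩)
  have hyne' : (-1 : ZMod p) ≠ y := fun h => hyne h.symm
  set S := Multiset.replicate (p - 1) (-1 : ZMod p) + Multiset.replicate 6 y with hSdef
  intro T hT hT0
  set k := T.count (-1) with hkdef
  set j := T.count y with hjdef
  have hcount : ∀ b : ZMod p, S.count b =
      (if (-1 : ZMod p) = b then p - 1 else 0) + (if y = b then 6 else 0) := by
    intro b
    rw [hSdef, Multiset.count_add, Multiset.count_replicate, Multiset.count_replicate]
  have hk : k ≤ p - 1 := by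
    have := Multiset.count_le_of_le (-1 : ZMod p) hT
    rw [hcount] at this
    simpa [hyne] using this
  have hj : j ≤ 6 := by
    have := Multiset.count_le_of_le y hT
    rw [hcount] at this
    simpa [hyne'] using this
  have hTeq : T = Multiset.replicate k (-1) + Multiset.replicate j y := by
    ext b
    rw [Multiset.count_add, Multiset.count_replicate, Multiset.count_replicate]
    by_cases hb1 : (-1 : ZMod p) = b
    · simp [← hb1, hyne, hkdef]
    · by_cases hby : y = b
      · simp [← hby, hyne', hjdef]
      · have := Multiset.count_le_of_le b hT
        rw [hcount b] at this
        rw [if_neg hb1, if_neg hby] at this ⊢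
        omega
  have hsum : T.sum = -(k : ZMod p) + (j : ZMod p) * y := by
    rw [hTeq, Multiset.sum_add, Multiset.sum_replicate, Multiset.sum_replicate,
      nsmul_eq_mul, nsmul_eq_mul]
    ring
  have hsumsq : (T.map (fun x => x ^ 2)).sum = (k : ZMod p) + (j : ZMod p) * y ^ 2 := by
    rw [hTeq, Multiset.map_add, Multiset.map_replicate, Multiset.map_replicate,
      Multiset.sum_add, Multiset.sum_replicate, Multiset.sum_replicate,
      nsmul_eq_mul, nsmul_eq_mul]
    ring
  have hphi : phi 1 1 1 T =
      (-(k : ZMod p) + (j : ZMod p) * y) ^ 2 + ((k : ZMod p) + (j : ZMod p) * y ^ 2)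
        + (-(k : ZMod p) + (j : ZMod p) * y) := by
    rw [phi, hsum, hsumsq]; ring
  rcases Nat.eq_zero_or_pos j with hj0 | hj1
  · -- j = 0 : phi = k² ≠ 0
    have hk1 : 1 ≤ k := by
      rcases Nat.eq_zero_or_pos k with hk0 | h
      · exfalso; apply hT0; rw [hTeq, hk0, hj0]; simp
      · exact h
    have hKne : (k : ZMod p) ≠ 0 := by
      intro hK0
      have hd : p ∣ k := (ZMod.natCast_eq_zero_iff k p).mp hK0
      have := Nat.le_of_dvd (by omega) hd
      omega
    have : phi 1 1 1 T = (k : ZMod p) ^ 2 := by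
      rw [hphi]
      have : (j : ZMod p) = 0 := by simp [hj0]
      rw [this]; ring
    rw [this]
    exact pow_ne_zero 2 hKne
  · -- 1 ≤ j ≤ 6
    intro hzero
    rw [hphi] at hzero
    obtain ⟨r, hr⟩ := hsq j hj1 hj
    have hJne : (j : ZMod p) ≠ 0 := by
      intro hJ0
      have hd : p ∣ j := (ZMod.natCast_eq_zero_iff j p).mp hJ0
      have := Nat.le_of_dvd (by omega) hd
      omega
    have hrne : r ≠ 0 := by
      intro h0; apply hJne; rw [hr, h0, mul_zero]
    apply hy
    refine ⟨((k : ZMod p) - (j : ZMod p) * y) * r⁻¹, ?_⟩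
    have hrinv : r * r⁻¹ = 1 := mul_inv_cancel₀ hrne
    have key : -(y ^ 2 + y) * (r * r) = ((k : ZMod p) - (j : ZMod p) * y) ^ 2 := by
      linear_combination (-(1 : ZMod p)) * hzero + (y ^ 2 + y) * hr
    calc -(y ^ 2 + y) = -(y ^ 2 + y) * (r * r) * (r⁻¹ * r⁻¹) := by
          rw [mul_assoc, show (r * r) * (r⁻¹ * r⁻¹) = (r * r⁻¹) * (r * r⁻¹) by ring,
            hrinv]; ring
      _ = ((k : ZMod p) - (j : ZMod p) * y) * r⁻¹
            * (((k : ZMod p) - (j : ZMod p) * y) * r⁻¹) := by rw [key]; ring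

instance fact_prime_three : Fact (Nat.Prime 3) := ⟨by norm_num⟩
instance fact_prime_five : Fact (Nat.Prime 5) := ⟨by norm_num⟩

/-- Corollary 5.1(iii): for a prime `p ≡ ±1` or `±49 (mod 120)` and
`φ(S) = (∑x)² + (∑x²) + (∑x)`, we have `D(φ,p) ≥ p + 6`. -/
theorem davenport_phi_ge_mod120 (p : ℕ) (hp : p.Prime)
    (hmod : p % 120 = 1 ∨ p % 120 = 119 ∨ p % 120 = 49 ∨ p % 120 = 71) :
    ∃ D : ℕ, IsLeast (DavSet (1 : ZMod p) 1 1) D ∧ p + 6 ≤ D := by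
  haveI : Fact p.Prime := ⟨hp⟩
  -- basic size facts
  have h2le : 2 ≤ p := hp.two_le
  have hp7 : 7 ≤ p := by
    rcases hmod with h | h | h | h <;> omega
  have hp2 : p ≠ 2 := by omega
  -- 2 is a square mod p
  have h8 : p % 8 = 1 ∨ p % 8 = 7 := by
    rcases hmod with h | h | h | h <;> omega
  have hsq2 : IsSquare (2 : ZMod p) := (ZMod.exists_sq_eq_two_iff hp2).mpr h8
  -- 3 is a square mod p
  have hsq3 : IsSquare (3 : ZMod p) := by
    rcases (show p % 4 = 1 ∧ p % 3 = 1 ∨ p % 4 = 3 ∧ p % 3 = 2 by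
        rcases hmod with h | h | h | h <;> omega) with ⟨h4, h3⟩ | ⟨h4, h3⟩
    · refine (ZMod.exists_sq_eq_prime_iff_of_mod_four_eq_one (p := p) (q := 3) h4
        (show (3 : ℕ) ≠ 2 by norm_num)).mpr ?_
      have : ((p : ℕ) : ZMod 3) = 1 := by
        rw [← ZMod.natCast_mod, h3]; norm_num
      rw [this]; exact IsSquare.one
    · refine (ZMod.exists_sq_eq_prime_iff_of_mod_four_eq_three (p := p) (q := 3) h4
        (show (3 : ℕ) % 4 = 3 by norm_num) (show p ≠ 3 by omega)).mpr ?_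
      have : ((p : ℕ) : ZMod 3) = 2 := by
        rw [← ZMod.natCast_mod, h3]; norm_num
      rw [this]
      decide
  -- 5 is a square mod p
  have hsq5 : IsSquare (5 : ZMod p) := by
    have h := ZMod.exists_sq_eq_prime_iff_of_mod_four_eq_one (p := 5) (q := p)
      (by norm_num) hp2
    have h5 : p % 5 = 1 ∨ p % 5 = 4 := by
      rcases hmod with h | h | h | h <;> omega
    have : IsSquare ((p : ℕ) : ZMod 5) := by
      rcases h5 with h5 | h5 <;>
        · rw [← ZMod.natCast_mod, h5]; decide
    have := h.mp this
    exact_mod_cast this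
  -- all of 1,…,6 are squares mod p
  have hsq : ∀ j : ℕ, 1 ≤ j → j ≤ 6 → IsSquare ((j : ZMod p)) := by
    intro j h1 h6
    interval_cases j
    · simp
    · exact_mod_cast hsq2
    · exact_mod_cast hsq3
    · exact ⟨2, by norm_num⟩
    · exact_mod_cast hsq5
    · have : ((6 : ℕ) : ZMod p) = 2 * 3 := by norm_num
      rw [this]; exact hsq2.mul hsq3
  obtain ⟨y, hy⟩ := exists_nonsquare_val p hp2 hsq2
  -- the zero-free multiset of size p + 5
  set S := Multiset.replicate (p - 1) (-1 : ZMod p) + Multiset.replicate 6 y with hSdef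
  have hScard : Multiset.card S = p + 5 := by
    rw [hSdef, Multiset.card_add, Multiset.card_replicate, Multiset.card_replicate]
    omega
  have hSfree : PhiZeroFree 1 1 1 S := zerofree_construction p hp7 y hy hsq
  -- the Davenport constant exists
  have hne : (DavSet (1 : ZMod p) 1 1).Nonempty := ⟨p * p + 1, davset_mem_aux 1 1 1⟩
  refine ⟨sInf (DavSet (1 : ZMod p) 1 1), ⟨Nat.sInf_mem hne, fun x hx => Nat.sInf_le hx⟩, ?_⟩
  by_contra hlt
  push_neg at hlt
  obtain ⟨hpos, hall⟩ := Nat.sInf_mem hne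
  obtain ⟨T, hTS, hT0, hTphi⟩ := hall S (by omega)
  exact hSfree T hTS hT0 hTphi
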